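/- Let (a_k)_{k≥0} be a sequence of complex numbers with limsup_{k→∞} |a_k|^{1/k} = ∞. Set A_n = max_{1≤k≤n} |a_k|^{1/k} and p_n(z) = ∑_{k=0}^n a_k A_n^{−k} z^k. Then for every δ > 0 and every γ ∈ (0,1), liminf_{n→∞} max_{|z| = 1+δ} |p_n(z)|^{1/n} / |z| ≥ (1+δ)^{−γ} · L(γ), where L(γ) = liminf_{n→∞} ( max_{(1-γ)n ≤ k ≤ n} |a_k|^{1/k} ) / A_n. Consequently, liminf_{n→∞} max_{|z| = 1+δ} |p_n(z)|^{1/n} / |z| ≥ G, where G = lim_{γ→0+} L(γ) is the gauge of (a_k). -/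

import Mathlib

open Filter Polynomial Metric Set
open scoped Classical Real

lemma circleIntegral_finset_sum' {ι : Type*} (s : Finset ι) (f : ι → ℂ → ℂ) (c : ℂ) (R : ℝ)
    (h : ∀ i ∈ s, CircleIntegrable (f i) c R) :
    (∮ z in C(c, R), ∑ i ∈ s, f i z) = ∑ i ∈ s, ∮ z in C(c, R), f i z := by
  simp only [circleIntegral, Finset.smul_sum]
  exact intervalIntegral.integral_finset_sum fun i hi => (h i hi).out

lemma circleIntegral_zpow' (R : ℝ) (hR : 0 < R) (m : ℤ) :
    (∮ z in C((0:ℂ), R), z ^ m) = if m = -1 then 2 * π * Complex.I else 0 := by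
  split_ifs with h
  · subst h
    have := circleIntegral.integral_sub_inv_of_mem_ball
      (c := (0:ℂ)) (w := 0) (R := R) (by simpa using hR)
    simpa [zpow_neg_one] using this
  · have := circleIntegral.integral_sub_zpow_of_ne h (0:ℂ) 0 R
    simpa using this

lemma cauchy_coeff_bound' (p : Polynomial ℂ) {R : ℝ} (hR : 0 < R) (k : ℕ) (M : ℝ)
    (hM : ∀ z ∈ Metric.sphere (0:ℂ) R, ‖p.eval z‖ ≤ M) :
    ‖p.coeff k‖ * R ^ k ≤ M := by
  have hM0 : 0 ≤ M := le_trans (norm_nonneg _)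
    (hM (R : ℂ) (by simp [Complex.norm_real, abs_of_pos hR]))
  set N := p.natDegree + 1 with hN
  set g : ℕ → ℂ → ℂ := fun j z => p.coeff j * z ^ ((j : ℤ) - ((k : ℤ) + 1)) with hg
  have hzne : ∀ z ∈ Metric.sphere (0:ℂ) R, z ≠ 0 := by
    intro z hz h0
    rw [mem_sphere_iff_norm, h0] at hz
    simp at hz
    exact hR.ne' hz.symm
  have hint : ∀ j ∈ Finset.range N, CircleIntegrable (g j) (0:ℂ) R := by
    intro j _
    have hco : ContinuousOn (g j) (Metric.sphere (0:ℂ) R) := by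
      apply ContinuousOn.mul continuousOn_const
      exact (continuousOn_id).zpow₀ _ (fun z hz => Or.inl (hzne z hz))
    exact hco.circleIntegrable hR.le
  have heq : Set.EqOn (fun z : ℂ => z ^ (-((k:ℤ)+1)) * p.eval z)
      (fun z : ℂ => ∑ j ∈ Finset.range N, g j z) (Metric.sphere (0:ℂ) R) := by
    intro z hz
    have hz0 := hzne z hz
    simp only
    rw [p.eval_eq_sum_range, Finset.mul_sum]
    refine Finset.sum_congr rfl fun j _ => ?_
    rw [hg]
    simp only
    rw [mul_comm (z ^ (-((k:ℤ)+1))) _, mul_assoc]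
    congr 1
    rw [← zpow_natCast z j, ← zpow_add₀ hz0]
    try congr 1
    try ring
  have hI : (∮ z in C((0:ℂ), R), z ^ (-((k:ℤ)+1)) * p.eval z) = 2 * π * Complex.I * p.coeff k := by
    rw [circleIntegral.integral_congr hR.le heq, circleIntegral_finset_sum' _ _ _ _ hint]
    have : ∀ j ∈ Finset.range N, (∮ z in C((0:ℂ), R), g j z)
        = if j = k then 2 * π * Complex.I * p.coeff k else 0 := by
      intro j _
      rw [hg]
      simp only
      rw [circleIntegral.integral_const_mul, circleIntegral_zpow' R hR]
      have : ((j : ℤ) - ((k:ℤ)+1) = -1) ↔ j = k := by omega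
      split_ifs with h1 h2 h2
      · rw [h2]; ring
      · exact absurd (this.mp h1) h2
      · exact absurd (this.mpr h2) h1
      · ring
    rw [Finset.sum_congr rfl this, Finset.sum_ite_eq' (Finset.range N) k]
    split_ifs with h
    · rfl
    · have : p.coeff k = 0 := by
        apply p.coeff_eq_zero_of_natDegree_lt
        simp only [Finset.mem_range, hN] at h
        omega
      rw [this, mul_zero]
  have hnorm : ‖(2 : ℂ) * π * Complex.I * p.coeff k‖ ≤ 2 * π * R * (M * R ^ (-((k:ℤ)+1))) := by
    rw [← hI]
    apply circleIntegral.norm_integral_le_of_norm_le_const hR.le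
    intro z hz
    have hzR : ‖z‖ = R := by simpa using hz
    rw [norm_mul, norm_zpow, hzR, mul_comm]
    apply mul_le_mul (hM z hz) le_rfl (zpow_nonneg hR.le _) hM0
  have h2π : (0:ℝ) < 2 * π := by positivity
  rw [show ‖(2 : ℂ) * π * Complex.I * p.coeff k‖
      = 2 * π * ‖p.coeff k‖ by
    simp [norm_mul, Complex.norm_I, Complex.norm_real,
      abs_of_pos Real.pi_pos]
    try ring] at hnorm
  have : ‖p.coeff k‖ ≤ R * (M * R ^ (-((k:ℤ)+1))) := by
    have := (mul_le_mul_iff_right₀ h2π).mp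
      (by linarith [hnorm] : 2 * π * ‖p.coeff k‖
        ≤ 2 * π * (R * (M * R ^ (-((k:ℤ)+1)))))
    exact this
  calc ‖p.coeff k‖ * R ^ k ≤ R * (M * R ^ (-((k:ℤ)+1))) * R ^ k := by
        apply mul_le_mul_of_nonneg_right this (pow_nonneg hR.le _)
    _ = M := by
        rw [zpow_neg, zpow_add₀ hR.ne', zpow_one, zpow_natCast]
        field_simp
        try ring

/-- the key lower bound in the proof of Theorem 3.4. Let `∑ a_k z^k`
have null radius of convergence, `A_n = max_{1 ≤ k ≤ n} |a_k|^{1/k}`, and let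
`p_n(z) = ∑_{k=0}^n a_k A_n^{-k} z^k` be the normalized sections. Then for all `δ > 0`
and `γ ∈ (0,1)`, `liminf_n max_{|z|=1+δ} |p_n(z)|^{1/n}/|z| ≥ (1+δ)^{-γ} L(γ)`, where
`L(γ) = liminf_n (max_{(1-γ)n ≤ k ≤ n} |a_k|^{1/k})/A_n`; consequently this liminf is at
least the gauge `G = lim_{γ→0⁺} L(γ)`. -/
theorem stmt_15 (a : ℕ → ℂ) (A : ℕ → ℝ) (B : ℝ → ℕ → ℝ) (L : ℝ → ℝ) (G : ℝ)
    (P : ℕ → Polynomial ℂ)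
    (hrad : Filter.limsup
      (fun k : ℕ => ((‖a k‖ ^ ((k : ℝ)⁻¹) : ℝ) : EReal)) Filter.atTop = ⊤)
    (hA : ∀ n : ℕ, 1 ≤ n → IsGreatest
      {x : ℝ | ∃ k : ℕ, 1 ≤ k ∧ k ≤ n ∧ x = ‖a k‖ ^ ((k : ℝ)⁻¹)} (A n))
    (hB : ∀ γ ∈ Set.Ioo (0 : ℝ) 1, ∀ n : ℕ, 1 ≤ n → IsGreatest
      {x : ℝ | ∃ k : ℕ, (1 - γ) * (n : ℝ) ≤ (k : ℝ) ∧ k ≤ n ∧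
        x = ‖a k‖ ^ ((k : ℝ)⁻¹)} (B γ n))
    (hL : ∀ γ ∈ Set.Ioo (0 : ℝ) 1,
      ((L γ : ℝ) : EReal) = Filter.liminf (fun n : ℕ => ((B γ n / A n : ℝ) : EReal))
        Filter.atTop)
    (hG : Filter.Tendsto L (nhdsWithin 0 (Set.Ioi (0 : ℝ))) (nhds G))
    (hP : ∀ n : ℕ, P n = ∑ k ∈ Finset.range (n + 1),
      Polynomial.C (a k * ((A n : ℂ))⁻¹ ^ k) * Polynomial.X ^ k) :
    (∀ δ : ℝ, 0 < δ → ∀ γ ∈ Set.Ioo (0 : ℝ) 1,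
      (((1 + δ) ^ (-γ) * L γ : ℝ) : EReal) ≤
        Filter.liminf (fun n : ℕ =>
          ((sSup ((fun z : ℂ =>
              ‖(P n).eval z‖ ^ ((n : ℝ)⁻¹) / ‖z‖) ''
            Metric.sphere (0 : ℂ) (1 + δ)) : ℝ) : EReal)) Filter.atTop) ∧
    (∀ δ : ℝ, 0 < δ →
      ((G : ℝ) : EReal) ≤
        Filter.liminf (fun n : ℕ =>
          ((sSup ((fun z : ℂ =>
              ‖(P n).eval z‖ ^ ((n : ℝ)⁻¹) / ‖z‖) ''
            Metric.sphere (0 : ℂ) (1 + δ)) : ℝ) : EReal)) Filter.atTop) := by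
  -- eventually A n is positive
  have hApos : ∀ᶠ n : ℕ in atTop, 0 < A n ∧ 1 ≤ n := by
    have hfreq : ∃ᶠ k : ℕ in atTop,
        (0 : EReal) < ((‖a k‖ ^ ((k : ℝ)⁻¹) : ℝ) : EReal) := by
      apply Filter.frequently_lt_of_lt_limsup
      · isBoundedDefault
      · rw [hrad]; exact lt_top_iff_ne_top.mpr (by simp)
    obtain ⟨k₀, hk₀1, hk₀pos⟩ :=
      (hfreq.and_eventually (Filter.eventually_ge_atTop 1)).exists
    have hk₀pos' : (0:ℝ) < ‖a k₀‖ ^ ((k₀ : ℝ)⁻¹) := by exact_mod_cast hk₀1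
    filter_upwards [Filter.eventually_ge_atTop k₀, Filter.eventually_ge_atTop 1] with n hn h1
    refine ⟨lt_of_lt_of_le hk₀pos' ((hA n h1).2 ⟨k₀, hk₀pos, le_trans ?_ hn, rfl⟩), h1⟩
    exact le_refl k₀
  -- main inequality for each δ, γ
  have main : ∀ δ : ℝ, 0 < δ → ∀ γ ∈ Set.Ioo (0 : ℝ) 1,
      (((1 + δ) ^ (-γ) * L γ : ℝ) : EReal) ≤
        Filter.liminf (fun n : ℕ =>
          ((sSup ((fun z : ℂ =>
              ‖(P n).eval z‖ ^ ((n : ℝ)⁻¹) / ‖z‖) ''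
            Metric.sphere (0 : ℂ) (1 + δ)) : ℝ) : EReal)) Filter.atTop := by
    intro δ hδ γ hγ
    obtain ⟨hγ0, hγ1⟩ := hγ
    have hR : (0:ℝ) < 1 + δ := by linarith
    set M : ℕ → ℝ := fun n => sSup ((fun z : ℂ =>
        ‖(P n).eval z‖ ^ ((n : ℝ)⁻¹) / ‖z‖) ''
      Metric.sphere (0 : ℂ) (1 + δ)) with hM
    set c : ℝ := (1 + δ) ^ (-γ) with hc
    have hcpos : 0 < c := Real.rpow_pos_of_pos hR _
    have hMnonneg : ∀ n, 0 ≤ M n := by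
      intro n
      apply Real.sSup_nonneg
      rintro x ⟨z, hz, rfl⟩
      positivity
    -- key pointwise bound
    have key : ∀ n : ℕ, 1 ≤ n → 0 < A n → c * (B γ n / A n) ≤ M n := by
      intro n hn hA0
      obtain ⟨⟨k, hk1, hk2, hk3⟩, hBub⟩ := hB γ ⟨hγ0, hγ1⟩ n hn
      have hnpos : (0:ℝ) < n := by exact_mod_cast hn
      have hk0 : 1 ≤ k := by
        have h1 : (0:ℝ) < (1 - γ) * n := by
          apply mul_pos (by linarith) hnpos
        have : (0:ℝ) < (k:ℝ) := lt_of_lt_of_le h1 hk1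
        exact_mod_cast Nat.one_le_iff_ne_zero.mpr (by exact_mod_cast this.ne')
      have hBnonneg : 0 ≤ B γ n := hk3 ▸ Real.rpow_nonneg (norm_nonneg _) _
      rcases eq_or_lt_of_le hBnonneg with hB0 | hBpos
      · rw [← hB0]
        simpa using hMnonneg n
      have hBA : B γ n ≤ A n := (hA n hn).2 ⟨k, hk0, hk2, hk3⟩
      -- maximizer of |p| on the sphere
      obtain ⟨z₀, hz₀, hz₀max⟩ := (isCompact_sphere (0:ℂ) (1+δ)).exists_isMaxOn
        (NormedSpace.sphere_nonempty.mpr hR.le)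
        ((continuous_norm.comp ((P n).continuous)).continuousOn)
      have hz₀max' : ∀ z ∈ Metric.sphere (0:ℂ) (1+δ),
          ‖(P n).eval z‖ ≤ ‖(P n).eval z₀‖ := fun z hz => hz₀max hz
      have hz₀abs : ‖z₀‖ = 1 + δ := by
        rw [Metric.mem_sphere, Complex.dist_eq, sub_zero] at hz₀
        exact hz₀
      -- coefficient of P n at k
      have hcoeff : (P n).coeff k = a k * ((A n : ℂ))⁻¹ ^ k := by
        rw [hP n, Polynomial.finset_sum_coeff]
        have : ∀ j ∈ Finset.range (n+1),
            (Polynomial.C (a j * ((A n : ℂ))⁻¹ ^ j) * Polynomial.X ^ j).coeff k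
            = if j = k then a k * ((A n : ℂ))⁻¹ ^ k else 0 := by
          intro j _
          rw [Polynomial.coeff_C_mul, Polynomial.coeff_X_pow]
          split_ifs with h1 h2 h2
          · rw [h2]; ring
          · exact absurd h1.symm h2
          · exact absurd h2.symm h1
          · ring
        rw [Finset.sum_congr rfl this, Finset.sum_ite_eq' (Finset.range (n+1)) k]
        rw [if_pos (Finset.mem_range.mpr (by omega))]
      have hcb := cauchy_coeff_bound' (P n) hR k (‖(P n).eval z₀‖) hz₀max'
      have habs : ‖(P n).coeff k‖ = ‖a k‖ * ((A n)⁻¹) ^ k := by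
        rw [hcoeff, norm_mul, norm_pow, norm_inv, Complex.norm_real, Real.norm_eq_abs, abs_of_pos hA0]
      have hak : ‖a k‖ = (B γ n) ^ k := by
        rw [hk3, ← Real.rpow_natCast (‖a k‖ ^ ((k : ℝ)⁻¹)) k,
          ← Real.rpow_mul (norm_nonneg _),
          inv_mul_cancel₀ (Nat.cast_ne_zero.mpr (by omega) : ((k:ℝ) ≠ 0)), Real.rpow_one]
      set q : ℝ := B γ n / A n with hq
      have hqpos : 0 < q := div_pos hBpos hA0
      have hq1 : q ≤ 1 := (div_le_one hA0).mpr hBA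
      -- (q * (1+δ))^k ≤ |p(z₀)|
      have h1 : (q * (1 + δ)) ^ k ≤ ‖(P n).eval z₀‖ := by
        have : (q * (1 + δ)) ^ k = ‖(P n).coeff k‖ * (1 + δ) ^ k := by
          rw [habs, hak, hq]
          rw [div_eq_mul_inv, mul_pow, mul_pow, inv_pow]
        rw [this]
        exact hcb
      set t : ℝ := (k : ℝ) / n with ht
      have ht0 : 0 < t := div_pos (by exact_mod_cast hk0) hnpos
      have ht1 : t ≤ 1 := (div_le_one hnpos).mpr (by exact_mod_cast hk2)
      have htγ : 1 - γ ≤ t := by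
        rw [ht, le_div_iff₀ hnpos]
        exact hk1
      -- raise to power 1/n
      have h2 : (q * (1 + δ)) ^ t ≤ ‖(P n).eval z₀‖ ^ ((n:ℝ)⁻¹) := by
        have hb0 : (0:ℝ) ≤ (q * (1 + δ)) ^ k := by positivity
        have := Real.rpow_le_rpow hb0 h1 (inv_nonneg.mpr hnpos.le)
        rwa [← Real.rpow_natCast (q * (1 + δ)) k, ← Real.rpow_mul (by positivity),
          ← div_eq_mul_inv] at this
      -- M n ≥ |p(z₀)|^(1/n) / (1+δ)
      have h3 : ‖(P n).eval z₀‖ ^ ((n:ℝ)⁻¹) / ‖z₀‖ ≤ M n := by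
        apply le_csSup
        · apply IsCompact.bddAbove_image (isCompact_sphere (0:ℂ) (1+δ))
          apply ContinuousOn.div
          · apply Continuous.continuousOn
            apply Continuous.rpow_const (continuous_norm.comp ((P n).continuous))
            intro x
            right
            positivity
          · exact continuous_norm.continuousOn
          · intro z hz
            rw [Metric.mem_sphere, Complex.dist_eq, sub_zero] at hz
            rw [hz]
            exact hR.ne'
        · exact ⟨z₀, hz₀, rfl⟩
      -- chain of rpow inequalities
      have h4 : c * q ≤ (q * (1 + δ)) ^ t / (1 + δ) := by
        have e1 : (q * (1 + δ)) ^ t = q ^ t * (1 + δ) ^ t :=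
          Real.mul_rpow hqpos.le hR.le
        have e2 : q ^ (1:ℝ) ≤ q ^ t := Real.rpow_le_rpow_of_exponent_ge hqpos hq1 ht1
        rw [Real.rpow_one] at e2
        have e3 : (1 + δ) ^ (-γ) ≤ (1 + δ) ^ (t - 1) :=
          Real.rpow_le_rpow_of_exponent_le (by linarith) (by linarith)
        have e4 : (1 + δ) ^ (t - 1) = (1 + δ) ^ t / (1 + δ) := by
          rw [Real.rpow_sub hR, Real.rpow_one]
        calc c * q = q * (1 + δ) ^ (-γ) := by rw [hc]; ring
          _ ≤ q ^ t * ((1 + δ) ^ t / (1 + δ)) := by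
              rw [← e4]
              apply mul_le_mul e2 e3 (Real.rpow_nonneg hR.le _) (Real.rpow_nonneg hqpos.le _)
          _ = (q * (1 + δ)) ^ t / (1 + δ) := by rw [e1]; ring
      calc c * q ≤ (q * (1 + δ)) ^ t / (1 + δ) := h4
        _ ≤ ‖(P n).eval z₀‖ ^ ((n:ℝ)⁻¹) / (1 + δ) := by
            gcongr
        _ = ‖(P n).eval z₀‖ ^ ((n:ℝ)⁻¹) / ‖z₀‖ := by rw [hz₀abs]
        _ ≤ M n := h3
    -- liminf argument
    have keyη : ∀ η : ℝ, η < L γ →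
        ((c * η : ℝ) : EReal) ≤ Filter.liminf (fun n : ℕ => ((M n : ℝ) : EReal)) atTop := by
      intro η hη
      rcases le_or_gt η 0 with hη0 | hη0
      · calc ((c * η : ℝ) : EReal) ≤ ((0:ℝ) : EReal) := by
              exact_mod_cast mul_nonpos_of_nonneg_of_nonpos hcpos.le hη0
          _ ≤ _ := by
              apply Filter.le_liminf_of_le
              · isBoundedDefault
              · exact Filter.Eventually.of_forall fun n => by exact_mod_cast hMnonneg n
      · have hlt : ((η:ℝ) : EReal) < Filter.liminf
            (fun n : ℕ => ((B γ n / A n : ℝ) : EReal)) atTop := by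
          rw [← hL γ ⟨hγ0, hγ1⟩]
          exact_mod_cast hη
        have hev := Filter.eventually_lt_of_lt_liminf hlt
        apply Filter.le_liminf_of_le
        · isBoundedDefault
        · filter_upwards [hev, hApos] with n h1 ⟨h2, h3⟩
          have hBAn : η < B γ n / A n := by exact_mod_cast h1
          have : c * η ≤ M n :=
            le_trans (mul_le_mul_of_nonneg_left hBAn.le hcpos.le) (key n h3 h2)
          exact_mod_cast this
    -- conclude
    apply le_of_forall_lt
    intro b hb
    obtain ⟨m, hbm, hm⟩ := EReal.lt_iff_exists_real_btwn.mp hb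
    have hm' : m < c * L γ := by exact_mod_cast hm
    have hη : m / c < L γ := (div_lt_iff₀ hcpos).mpr (by linarith)
    have hcm : c * (m / c) = m := by field_simp
    calc b < ((m:ℝ) : EReal) := hbm
      _ = ((c * (m / c) : ℝ) : EReal) := by rw [hcm]
      _ ≤ _ := keyη (m / c) hη
  refine ⟨main, ?_⟩
  intro δ hδ
  have hR : (0:ℝ) < 1 + δ := by linarith
  set l := nhdsWithin (0:ℝ) (Set.Ioi (0:ℝ)) with hl
  have htend : Filter.Tendsto (fun γ : ℝ => (((1 + δ) ^ (-γ) * L γ : ℝ) : EReal)) l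
      (nhds ((G : ℝ) : EReal)) := by
    have t1 : Filter.Tendsto (fun γ : ℝ => (1 + δ) ^ (-γ)) l (nhds 1) := by
      have hcont : ContinuousAt (fun γ : ℝ => (1 + δ) ^ (-γ)) 0 := by
        apply ContinuousAt.comp (x := (0:ℝ)) (g := ((1+δ : ℝ) ^ · : ℝ → ℝ))
        · exact (Real.continuousAt_const_rpow hR.ne').congr (by simp [neg_zero])
        · exact continuous_neg.continuousAt
      have := hcont.tendsto
      rw [neg_zero, Real.rpow_zero] at this
      exact this.mono_left nhdsWithin_le_nhds
    have t2 : Filter.Tendsto (fun γ : ℝ => (1 + δ) ^ (-γ) * L γ) l (nhds G) := by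
      have := t1.mul hG
      rwa [one_mul] at this
    exact (continuous_coe_real_ereal.tendsto G).comp t2
  apply le_of_tendsto htend
  filter_upwards [Ioo_mem_nhdsGT_of_mem (Set.mem_Ico.mpr ⟨le_refl 0, zero_lt_one⟩)] with γ hγ
  exact main δ hδ γ hγ
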